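/- arXiv:1912.11218 — 5 statements merged into one kernel-verified Lean document; each statement's English description precedes it below -/
import Mathlib

section
/- For probability measures P and Q on ℝ with cumulative distribution functions F and G respectively, the continuous-ranked probability score CRPS(F, y) = −∫ (F(y') − 1{y' ≥ y})² dy' induces the divergence d(F,G) := E_{Y∼G}[CRPS(G,Y)] − E_{Y∼G}[CRPS(F,Y)] = ∫ (F(y) − G(y))² dy. In particular CRPS is a proper scoring rule. -/
open MeasureTheory

/-- The continuous-ranked probability score of a distribution function `F`
at a realized outcome `y`. -/
noncomputable def CRPS (F : ℝ → ℝ) (y : ℝ) : ℝ :=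
  -∫ t, (F t - if y ≤ t then (1 : ℝ) else 0) ^ 2

private lemma abs_mul_le_half_sq_add_sq (a b : ℝ) : |a * b| ≤ (a ^ 2 + b ^ 2) / 2 := by
  rcases abs_cases (a * b) with ⟨h1, _⟩ | ⟨h1, _⟩ <;> rw [h1] <;>
    nlinarith [sq_nonneg (a - b), sq_nonneg (a + b)]

/-- the divergence induced by CRPS is the squared L² distance of
the CDFs, and consequently CRPS is a proper scoring rule. -/
theorem crps_divergence (P Q : Measure ℝ) [IsProbabilityMeasure P] [IsProbabilityMeasure Q]
    (F G : ℝ → ℝ)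
    (hF : ∀ y, F y = (P (Set.Iic y)).toReal)
    (hG : ∀ y, G y = (Q (Set.Iic y)).toReal)
    (hFint : Integrable (fun y => CRPS F y) Q)
    (hGint : Integrable (fun y => CRPS G y) Q)
    (hFG : Integrable (fun t => (F t - G t) ^ 2))
    (hFy : ∀ y, Integrable (fun t => (F t - if y ≤ t then (1 : ℝ) else 0) ^ 2))
    (hGy : ∀ y, Integrable (fun t => (G t - if y ≤ t then (1 : ℝ) else 0) ^ 2)) :
    (∫ y, CRPS G y ∂Q) - (∫ y, CRPS F y ∂Q) = ∫ t, (F t - G t) ^ 2 ∧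
    (∫ y, CRPS F y ∂Q) ≤ ∫ y, CRPS G y ∂Q := by
  set C : ℝ := ∫ t, (F t - G t) ^ 2 with hC
  -- measurability of F and G
  have mF : Measurable F := by
    have : Monotone F := by
      intro a b hab
      rw [hF, hF]
      exact ENNReal.toReal_mono (measure_ne_top P _)
        (measure_mono (Set.Iic_subset_Iic.mpr hab))
    exact this.measurable
  have mG : Measurable G := by
    have : Monotone G := by
      intro a b hab
      rw [hG, hG]
      exact ENNReal.toReal_mono (measure_ne_top Q _)
        (measure_mono (Set.Iic_subset_Iic.mpr hab))
    exact this.measurable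
  have mInd : Measurable (fun p : ℝ × ℝ => if p.1 ≤ p.2 then (1 : ℝ) else 0) :=
    Measurable.ite (measurableSet_le measurable_fst measurable_snd)
      measurable_const measurable_const
  -- the cross term, as a function on the product space
  set h : ℝ × ℝ → ℝ :=
    fun p => (F p.2 - G p.2) * (G p.2 - if p.1 ≤ p.2 then (1 : ℝ) else 0) with hh
  have mh : Measurable h :=
    ((mF.comp measurable_snd).sub (mG.comp measurable_snd)).mul
      ((mG.comp measurable_snd).sub mInd)
  have mGsq : Measurable (fun p : ℝ × ℝ =>
      (G p.2 - if p.1 ≤ p.2 then (1 : ℝ) else 0) ^ 2) :=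
    ((mG.comp measurable_snd).sub mInd).pow_const 2
  -- integrability of (G - ind)^2 on the product measure
  have hsq : Integrable (fun p : ℝ × ℝ =>
      (G p.2 - if p.1 ≤ p.2 then (1 : ℝ) else 0) ^ 2) (Q.prod volume) := by
    rw [integrable_prod_iff mGsq.aestronglyMeasurable]
    constructor
    · exact Filter.Eventually.of_forall fun y => hGy y
    · have heq : (fun y => ∫ t, ‖(G t - if y ≤ t then (1 : ℝ) else 0) ^ 2‖)
          = fun y => -CRPS G y := by
        funext y
        rw [CRPS, neg_neg]
        congr 1
        funext t
        rw [Real.norm_eq_abs, abs_of_nonneg (sq_nonneg _)]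
      rw [heq]
      exact hGint.neg
  -- integrability of (F - G)^2 on the product measure
  have hfsq : Integrable (fun p : ℝ × ℝ => (F p.2 - G p.2) ^ 2) (Q.prod volume) := by
    have mfs : Measurable (fun p : ℝ × ℝ => (F p.2 - G p.2) ^ 2) :=
      ((mF.comp measurable_snd).sub (mG.comp measurable_snd)).pow_const 2
    rw [integrable_prod_iff mfs.aestronglyMeasurable]
    constructor
    · exact Filter.Eventually.of_forall fun _ => hFG
    · have heq : (fun _ : ℝ => ∫ t, ‖(F t - G t) ^ 2‖)
          = fun _ : ℝ => ∫ t, (F t - G t) ^ 2 := by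
        funext y
        congr 1
        funext t
        rw [Real.norm_eq_abs, abs_of_nonneg (sq_nonneg _)]
      rw [heq]
      exact integrable_const _
  -- integrability of the cross term on the product measure
  have H : Integrable h (Q.prod volume) := by
    refine Integrable.mono' (((hfsq.add hsq).div_const 2)) mh.aestronglyMeasurable ?_
    refine Filter.Eventually.of_forall fun p => ?_
    rw [hh]
    simp only [Real.norm_eq_abs]
    exact abs_mul_le_half_sq_add_sq _ _
  -- the key Fubini computation : the Q-average of the cross term vanishes
  have key : (∫ y, (∫ t, (F t - G t) * (G t - if y ≤ t then (1 : ℝ) else 0)) ∂Q) = 0 := by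
    have swap := integral_integral_swap (f := fun y t =>
      (F t - G t) * (G t - if y ≤ t then (1 : ℝ) else 0)) (μ := Q) (ν := volume) H
    rw [swap]
    have inner : ∀ t : ℝ,
        (∫ y, (F t - G t) * (G t - if y ≤ t then (1 : ℝ) else 0) ∂Q) = 0 := by
      intro t
      rw [integral_const_mul]
      have hip : (∫ y, (G t - if y ≤ t then (1 : ℝ) else 0) ∂Q) = 0 := by
        have hind : (∫ y, (if y ≤ t then (1 : ℝ) else 0) ∂Q)
            = (Q (Set.Iic t)).toReal := by
          have : (fun y => if y ≤ t then (1 : ℝ) else 0)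
              = Set.indicator (Set.Iic t) (fun _ => (1 : ℝ)) := by
            funext y
            simp [Set.indicator, Set.mem_Iic]
          rw [this, integral_indicator_const _ measurableSet_Iic]
          simp [Measure.real]
        rw [integral_sub (integrable_const _) ?_, hind]
        · simp [hG t]
        · refine (integrable_const (1 : ℝ)).mono' ?_ ?_
          · exact (Measurable.ite (measurableSet_le measurable_id measurable_const)
              measurable_const measurable_const).aestronglyMeasurable
          · refine Filter.Eventually.of_forall fun y => ?_
            by_cases hy : y ≤ t <;> simp [hy]
      rw [hip, mul_zero]
    calc (∫ t, ∫ y, (F t - G t) * (G t - if y ≤ t then (1 : ℝ) else 0) ∂Q)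
        = ∫ t : ℝ, (0 : ℝ) := by
          congr 1
          funext t
          exact inner t
      _ = 0 := integral_zero _ _
  -- pointwise cross-term integrability (in t, for fixed y)
  have Icross : ∀ y, Integrable
      (fun t => (F t - G t) * (G t - if y ≤ t then (1 : ℝ) else 0)) := by
    intro y
    have : (fun t => (F t - G t) * (G t - if y ≤ t then (1 : ℝ) else 0))
        = fun t => ((F t - if y ≤ t then (1 : ℝ) else 0) ^ 2
            - (G t - if y ≤ t then (1 : ℝ) else 0) ^ 2 - (F t - G t) ^ 2) / 2 := by
      funext t
      ring
    rw [this]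
    exact (((hFy y).sub (hGy y)).sub hFG).div_const 2
  -- pointwise identity in y
  have eq1 : ∀ y, CRPS G y - CRPS F y
      = C + 2 * ∫ t, (F t - G t) * (G t - if y ≤ t then (1 : ℝ) else 0) := by
    intro y
    have hsplit : (fun t => (F t - if y ≤ t then (1 : ℝ) else 0) ^ 2)
        = fun t => ((F t - G t) ^ 2
            + 2 * ((F t - G t) * (G t - if y ≤ t then (1 : ℝ) else 0)))
          + (G t - if y ≤ t then (1 : ℝ) else 0) ^ 2 := by
      funext t
      ring
    have hint : (∫ t, (F t - if y ≤ t then (1 : ℝ) else 0) ^ 2)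
        = (C + 2 * ∫ t, (F t - G t) * (G t - if y ≤ t then (1 : ℝ) else 0))
          + ∫ t, (G t - if y ≤ t then (1 : ℝ) else 0) ^ 2 := by
      have i1 : Integrable (fun t => (F t - G t) ^ 2
          + 2 * ((F t - G t) * (G t - if y ≤ t then (1 : ℝ) else 0))) :=
        hFG.add ((Icross y).const_mul 2)
      rw [hsplit, integral_add i1 (hGy y),
        integral_add hFG ((Icross y).const_mul 2), integral_const_mul]
    simp only [CRPS]
    rw [hint]
    ring
  -- integrability of the cross-term average as a function of y
  have hAint : Integrable
      (fun y => ∫ t, (F t - G t) * (G t - if y ≤ t then (1 : ℝ) else 0)) Q := by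
    have : (fun y => ∫ t, (F t - G t) * (G t - if y ≤ t then (1 : ℝ) else 0))
        = fun y => (CRPS G y - CRPS F y - C) / 2 := by
      funext y
      have := eq1 y
      linarith
    rw [this]
    exact ((hGint.sub hFint).sub (integrable_const C)).div_const 2
  have main : (∫ y, CRPS G y ∂Q) - (∫ y, CRPS F y ∂Q) = C := by
    rw [← integral_sub hGint hFint]
    have : (fun y => CRPS G y - CRPS F y)
        = fun y => C + 2 * ∫ t, (F t - G t) * (G t - if y ≤ t then (1 : ℝ) else 0) := by
      funext y
      exact eq1 y
    rw [this, integral_add (integrable_const C) (hAint.const_mul 2),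
      integral_const_mul, key, integral_const]
    simp
  have hCnonneg : 0 ≤ C := integral_nonneg fun t => sq_nonneg _
  exact ⟨main, by linarith⟩
end

section
/- Fix n data points with, for each i, positive real numbers p_{i,1},…,p_{i,K} (leave-one-out predictive densities) and a unique index k*_i achieving the maximum of log p_{i,k} over k. Suppose the separation condition holds: log p_{i,k*_i} ≥ log p_{i,k'} + L for all k' ≠ k*_i and all i. Then for any weight vector w in the simplex, (1/n)∑_i log(∑_k w_k p_{i,k}) ≤ (1/n)∑_i log p_{i,k*_i} + (1/n)∑_i log(w_{k*_i} + (K−1)e^{−L}). -/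
open Finset

/-- under `L`-separation of the pointwise best model, the stacked
leave-one-out log score is bounded by the best-model log density plus
`log(w_{k*_i} + (K−1)e^{−L})`. -/
theorem stacking_separation_bound (n K : ℕ) (hn : 0 < n) (hK : 1 ≤ K)
    (p : Fin n → Fin K → ℝ) (hp : ∀ i k, 0 < p i k)
    (kstar : Fin n → Fin K) (L : ℝ)
    (hbest : ∀ i k, k ≠ kstar i →
      Real.log (p i k) + L ≤ Real.log (p i (kstar i))) :
    ∀ w : Fin K → ℝ, (∀ k, 0 ≤ w k) → ∑ k, w k = 1 →
      (1 / n : ℝ) * ∑ i, Real.log (∑ k, w k * p i k) ≤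
        (1 / n : ℝ) * ∑ i, Real.log (p i (kstar i)) +
          (1 / n : ℝ) * ∑ i, Real.log (w (kstar i) + ((K : ℝ) - 1) * Real.exp (-L)) := by
  intro w hw hw1
  rw [← mul_add, ← Finset.sum_add_distrib]
  apply mul_le_mul_of_nonneg_left _ (by positivity)
  apply Finset.sum_le_sum
  intro i _
  set k0 := kstar i
  -- w_k ≤ 1 for each k
  have hwle : ∀ k, w k ≤ 1 := by
    intro k
    rw [← hw1]
    exact Finset.single_le_sum (fun j _ => hw j) (Finset.mem_univ k)
  -- key pointwise bound
  have hpk : ∀ k, k ≠ k0 → p i k ≤ p i k0 * Real.exp (-L) := by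
    intro k hk
    have h := hbest i k hk
    have : Real.log (p i k) ≤ Real.log (p i k0) + (-L) := by linarith
    calc p i k = Real.exp (Real.log (p i k)) := (Real.exp_log (hp i k)).symm
      _ ≤ Real.exp (Real.log (p i k0) + (-L)) := Real.exp_le_exp.mpr this
      _ = p i k0 * Real.exp (-L) := by rw [Real.exp_add, Real.exp_log (hp i k0)]
  have hsum : ∑ k, w k * p i k ≤ p i k0 * (w k0 + ((K : ℝ) - 1) * Real.exp (-L)) := by
    rw [← Finset.sum_erase_add _ _ (Finset.mem_univ k0)]
    have h1 : ∑ k ∈ Finset.univ.erase k0, w k * p i k ≤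
        ((K : ℝ) - 1) * (p i k0 * Real.exp (-L)) := by
      calc ∑ k ∈ Finset.univ.erase k0, w k * p i k
          ≤ ∑ _k ∈ Finset.univ.erase k0, p i k0 * Real.exp (-L) := by
            apply Finset.sum_le_sum
            intro k hk
            have hk' : k ≠ k0 := (Finset.mem_erase.mp hk).1
            calc w k * p i k ≤ 1 * (p i k0 * Real.exp (-L)) := by
                  apply mul_le_mul (hwle k) (hpk k hk') (hp i k).le zero_le_one
              _ = p i k0 * Real.exp (-L) := one_mul _
        _ = ((K : ℝ) - 1) * (p i k0 * Real.exp (-L)) := by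
            rw [Finset.sum_const, Finset.card_erase_of_mem (Finset.mem_univ k0),
              Finset.card_univ, Fintype.card_fin, nsmul_eq_mul, Nat.cast_sub hK,
              Nat.cast_one]
    nlinarith [hp i k0, Real.exp_pos (-L), h1]
  -- LHS positive: some w_k > 0
  have hlpos : 0 < ∑ k, w k * p i k := by
    obtain ⟨k, hkpos⟩ : ∃ k, 0 < w k := by
      by_contra h
      push_neg at h
      have : ∑ k, w k = 0 := Finset.sum_eq_zero fun k _ => le_antisymm (h k) (hw k)
      rw [hw1] at this; norm_num at this
    have : 0 < w k * p i k := mul_pos hkpos (hp i k)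
    exact lt_of_lt_of_le this (Finset.single_le_sum
      (fun j _ => mul_nonneg (hw j) (hp i j).le) (Finset.mem_univ k))
  have hfac : 0 < w k0 + ((K : ℝ) - 1) * Real.exp (-L) := by
    have h2 := lt_of_lt_of_le hlpos hsum
    nlinarith [hp i k0]
  calc Real.log (∑ k, w k * p i k)
      ≤ Real.log (p i k0 * (w k0 + ((K : ℝ) - 1) * Real.exp (-L))) :=
        Real.log_le_log hlpos hsum
    _ = Real.log (p i k0) + Real.log (w k0 + ((K : ℝ) - 1) * Real.exp (-L)) :=
        Real.log_mul (hp i k0).ne' hfac.ne'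
end

section
/- Fix n data points, for each i positive reals p_{i,1},…,p_{i,K} with a unique pointwise-best index k*_i, and suppose log p_{i,k*_i} ≥ log p_{i,k'} + L for all k' ≠ k*_i. Let n_k = #{i : k*_i = k} and assume n_k > 0 for all k. Let w^(L) be any maximizer over the simplex of F_L(w) = (1/n)∑_i log(∑_k w_k p_{i,k}). Then as L → ∞ (with the counts n_k held fixed, i.e., along any sequence of instances with the same assignment of best indices and separation L), w^(L) converges to the vector (n_1/n, …, n_K/n). -/
open Finset Filter

lemma aux_log {x : ℝ} (hx : 0 < x) : Real.log x ≤ (x-1)*(x+3)/(2*(x+1)) := by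
  have hs : 0 < Real.sqrt x := Real.sqrt_pos.mpr hx
  have h1 : Real.log (Real.sqrt x) ≤ Real.sqrt x - 1 := Real.log_le_sub_one_of_pos hs
  have h2 : Real.log x = 2 * Real.log (Real.sqrt x) := by
    rw [Real.log_sqrt hx.le]; ring
  have hsq : Real.sqrt x ^ 2 = x := Real.sq_sqrt hx.le
  rw [le_div_iff₀ (by positivity)]
  nlinarith [sq_nonneg ((Real.sqrt x - 1)^2),
    mul_le_mul_of_nonneg_right h1 (by positivity : (0:ℝ) ≤ 4*(x+1)), hs.le]

lemma aux_ratio {q v : ℝ} (hq : 0 < q) (hv : 0 < v) :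
    q * (Real.log v - Real.log q) ≤ (v - q) - (v-q)^2/(2*(v+q)) := by
  have h := aux_log (div_pos hv hq)
  rw [Real.log_div hv.ne' hq.ne'] at h
  have h2 : q * ((v/q-1)*(v/q+3)/(2*(v/q+1))) = (v - q) - (v-q)^2/(2*(v+q)) := by
    have hvq : v + q ≠ 0 := by positivity
    field_simp
    ring
  calc q * (Real.log v - Real.log q) ≤ q * ((v/q-1)*(v/q+3)/(2*(v/q+1))) :=
        mul_le_mul_of_nonneg_left h hq.le
    _ = (v - q) - (v-q)^2/(2*(v+q)) := h2

/-- along a family of instances indexed by the separation level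
`L` (with the same pointwise-best assignment `kstar`), any maximizers `w L` of
the stacking objective converge, as `L → ∞`, to the empirical frequencies with
which each model is pointwise best. -/
theorem stacking_pointwise_selection_limit (n K : ℕ) (hn : 0 < n) (hK : 1 ≤ K)
    (p : ℝ → Fin n → Fin K → ℝ) (hp : ∀ L i k, 0 < p L i k)
    (kstar : Fin n → Fin K)
    (hsep : ∀ L, ∀ i, ∀ k, k ≠ kstar i →
      Real.log (p L i k) + L ≤ Real.log (p L i (kstar i)))
    (hcount : ∀ k : Fin K, 0 < ({i | kstar i = k} : Finset (Fin n)).card)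
    (w : ℝ → Fin K → ℝ)
    (hwsimplex : ∀ L, (∀ k, 0 ≤ w L k) ∧ ∑ k, w L k = 1)
    (hwmax : ∀ L, ∀ v : Fin K → ℝ, (∀ k, 0 ≤ v k) → ∑ k, v k = 1 →
      (1 / n : ℝ) * ∑ i, Real.log (∑ k, v k * p L i k) ≤
        (1 / n : ℝ) * ∑ i, Real.log (∑ k, w L k * p L i k)) :
    Tendsto w atTop
      (nhds (fun k => (({i | kstar i = k} : Finset (Fin n)).card : ℝ) / n)) := by
  have hnpos : (0:ℝ) < n := Nat.cast_pos.mpr hn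
  have hKpos : (0:ℝ) < K := by exact_mod_cast hK.trans_lt' Nat.zero_lt_one
  set c : Fin K → ℝ := fun k => (({i | kstar i = k} : Finset (Fin n)).card : ℝ) with hc
  set q : Fin K → ℝ := fun k => c k / n with hqdef
  have hcpos : ∀ k, 0 < c k := fun k => Nat.cast_pos.mpr (hcount k)
  have hcsum : ∑ k, c k = n := by
    simp only [hc]
    norm_cast
    have := (Finset.card_eq_sum_card_fiberwise (s := (univ : Finset (Fin n)))
      (t := (univ : Finset (Fin K))) (f := kstar) (fun i _ => mem_univ _)).symm
    simpa using this
  have hqpos : ∀ k, 0 < q k := fun k => div_pos (hcpos k) hnpos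
  have hqsum : ∑ k, q k = 1 := by
    simp only [hqdef, ← Finset.sum_div, hcsum, div_self hnpos.ne']
  have hqle : ∀ k, q k ≤ 1 := by
    intro k
    rw [hqdef, div_le_one hnpos]
    have h := Finset.card_filter_le (univ : Finset (Fin n)) (fun i => kstar i = k)
    have h2 : (Finset.univ : Finset (Fin n)).card = n := by simp
    rw [h2] at h
    simp only [hc]
    exact_mod_cast h
  have hfiber : ∀ g : Fin K → ℝ, ∑ i : Fin n, g (kstar i) = ∑ k : Fin K, c k * g k := by
    intro g
    rw [← Finset.sum_fiberwise_of_maps_to (fun i _ => mem_univ (kstar i)) (fun i => g (kstar i))]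
    refine Finset.sum_congr rfl fun k _ => ?_
    rw [Finset.sum_congr rfl (fun i hi => by rw [(Finset.mem_filter.mp hi).2]),
      Finset.sum_const, nsmul_eq_mul]
  -- the key quantitative bound
  have key : ∀ L : ℝ, (K:ℝ) * Real.exp (-L) ≤ 1 →
      ∀ k, |w L k - q k| ≤ Real.sqrt (6*K*Real.exp (-L)) + Real.exp (-L) := by
    intro L hδ1 k
    set δ := Real.exp (-L) with hδdef
    have hδ0 : 0 < δ := Real.exp_pos _
    have hK1 : (1:ℝ) ≤ K := by exact_mod_cast hK
    have hδle : δ ≤ 1 := by nlinarith [mul_le_mul_of_nonneg_right hK1 hδ0.le]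
    obtain ⟨hw0, hw1⟩ := hwsimplex L
    set u : Fin K → ℝ := w L with hudef
    have hule : ∀ k, u k ≤ 1 := by
      intro k
      calc u k ≤ ∑ j, u j := Finset.single_le_sum (fun j _ => hw0 j) (mem_univ k)
        _ = 1 := hw1
    -- p L i k ≤ δ * p L i (kstar i) for k ≠ kstar i
    have hpk : ∀ i k', k' ≠ kstar i → p L i k' ≤ δ * p L i (kstar i) := by
      intro i k' hk'
      have h := hsep L i k' hk'
      have : Real.log (p L i k') ≤ Real.log (δ * p L i (kstar i)) := by
        rw [Real.log_mul hδ0.ne' (hp L i (kstar i)).ne', hδdef, Real.log_exp]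
        linarith
      calc p L i k' = Real.exp (Real.log (p L i k')) := (Real.exp_log (hp L i k')).symm
        _ ≤ Real.exp (Real.log (δ * p L i (kstar i))) := Real.exp_le_exp.mpr this
        _ = δ * p L i (kstar i) := Real.exp_log (mul_pos hδ0 (hp L i (kstar i)))
    -- upper bound on log ∑ u p
    have hupper : ∀ i, Real.log (∑ k, u k * p L i k) ≤
        Real.log (p L i (kstar i)) + Real.log (u (kstar i) + δ) := by
      intro i
      have hsum_le : ∑ k, u k * p L i k ≤ p L i (kstar i) * (u (kstar i) + δ) := by
        rw [← Finset.add_sum_erase _ _ (mem_univ (kstar i))]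
        have h1 : ∑ k ∈ univ.erase (kstar i), u k * p L i k ≤
            ∑ k ∈ univ.erase (kstar i), u k * (δ * p L i (kstar i)) := by
          refine Finset.sum_le_sum fun k hk => ?_
          exact mul_le_mul_of_nonneg_left (hpk i k (Finset.mem_erase.mp hk).1) (hw0 k)
        have h2 : ∑ k ∈ univ.erase (kstar i), u k * (δ * p L i (kstar i)) =
            (∑ k ∈ univ.erase (kstar i), u k) * (δ * p L i (kstar i)) := by
          rw [Finset.sum_mul]
        have h3 : ∑ k ∈ univ.erase (kstar i), u k ≤ 1 := by
          rw [← hw1]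
          exact Finset.sum_le_sum_of_subset_of_nonneg (Finset.subset_univ _)
            (fun k _ _ => hw0 k)
        have h4 : (∑ k ∈ univ.erase (kstar i), u k) * (δ * p L i (kstar i)) ≤
            δ * p L i (kstar i) :=
          mul_le_of_le_one_left (mul_pos hδ0 (hp L i (kstar i))).le h3
        nlinarith [hp L i (kstar i)]
      have hpos : 0 < ∑ k, u k * p L i k := by
        refine Finset.sum_pos' (fun k _ => mul_nonneg (hw0 k) (hp L i k).le) ?_
        by_contra hcon
        push_neg at hcon
        have : ∀ k, u k = 0 := by
          intro k
          have := hcon k (mem_univ k)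
          nlinarith [hp L i k, hw0 k]
        simp [this] at hw1
      calc Real.log (∑ k, u k * p L i k) ≤ Real.log (p L i (kstar i) * (u (kstar i) + δ)) :=
            Real.log_le_log hpos hsum_le
        _ = Real.log (p L i (kstar i)) + Real.log (u (kstar i) + δ) :=
            Real.log_mul (hp L i (kstar i)).ne'
              (by have := hw0 (kstar i); positivity)
    -- lower bound on log ∑ q p
    have hlower : ∀ i, Real.log (q (kstar i)) + Real.log (p L i (kstar i)) ≤
        Real.log (∑ k, q k * p L i k) := by
      intro i
      have h1 : q (kstar i) * p L i (kstar i) ≤ ∑ k, q k * p L i k :=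
        Finset.single_le_sum (fun k _ => mul_nonneg (hqpos k).le (hp L i k).le) (mem_univ _)
      calc Real.log (q (kstar i)) + Real.log (p L i (kstar i))
          = Real.log (q (kstar i) * p L i (kstar i)) :=
            (Real.log_mul (hqpos _).ne' (hp L i _).ne').symm
        _ ≤ Real.log (∑ k, q k * p L i k) :=
            Real.log_le_log (mul_pos (hqpos _) (hp L i _)) h1
    -- combine via maximality
    have hA : ∑ i, Real.log (∑ k, q k * p L i k) ≤ ∑ i, Real.log (∑ k, u k * p L i k) := by
      have := hwmax L q (fun k => (hqpos k).le) hqsum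
      exact le_of_mul_le_mul_left this (by positivity : (0:ℝ) < 1/n)
    have hS : ∑ i, Real.log (q (kstar i)) ≤ ∑ i, Real.log (u (kstar i) + δ) := by
      have h1 : ∑ i, (Real.log (q (kstar i)) + Real.log (p L i (kstar i))) ≤
          ∑ i, Real.log (∑ k, q k * p L i k) := Finset.sum_le_sum fun i _ => hlower i
      have h2 : ∑ i, Real.log (∑ k, u k * p L i k) ≤
          ∑ i, (Real.log (p L i (kstar i)) + Real.log (u (kstar i) + δ)) :=
        Finset.sum_le_sum fun i _ => hupper i
      rw [Finset.sum_add_distrib] at h1 h2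
      linarith
    rw [hfiber (fun k => Real.log (q k)), hfiber (fun k => Real.log (u k + δ))] at hS
    -- Pinsker-type step
    have hck : ∀ k, c k = n * q k := by
      intro k
      rw [hqdef]
      field_simp
    have hper : ∀ k, c k * Real.log (u k + δ) - c k * Real.log (q k) ≤
        (n:ℝ) * ((u k + δ - q k) - (u k + δ - q k)^2/6) := by
      intro k
      have hv : 0 < u k + δ := by have := hw0 k; linarith
      have hr := aux_ratio (hqpos k) hv
      have hvq3 : u k + δ + q k ≤ 3 := by
        have := hule k; have := hqle k; linarith
      have hd : (u k + δ - q k)^2/6 ≤ (u k + δ - q k)^2/(2*(u k + δ + q k)) := by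
        apply div_le_div_of_nonneg_left (sq_nonneg _) (by linarith [hw0 k, hqpos k])
        linarith
      calc c k * Real.log (u k + δ) - c k * Real.log (q k)
          = (n:ℝ) * (q k * (Real.log (u k + δ) - Real.log (q k))) := by
            rw [hck k]; ring
        _ ≤ (n:ℝ) * ((u k + δ - q k) - (u k + δ - q k)^2/(2*(u k + δ + q k))) :=
            mul_le_mul_of_nonneg_left hr hnpos.le
        _ ≤ (n:ℝ) * ((u k + δ - q k) - (u k + δ - q k)^2/6) := by
            apply mul_le_mul_of_nonneg_left _ hnpos.le
            linarith
    have hT : ∑ k, (u k + δ - q k)^2 ≤ 6 * K * δ := by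
      have h1 : (0:ℝ) ≤ ∑ k, (c k * Real.log (u k + δ) - c k * Real.log (q k)) := by
        rw [Finset.sum_sub_distrib]
        linarith
      have h2 : ∑ k, (c k * Real.log (u k + δ) - c k * Real.log (q k)) ≤
          (n:ℝ) * ∑ k, ((u k + δ - q k) - (u k + δ - q k)^2/6) := by
        rw [Finset.mul_sum]
        exact Finset.sum_le_sum fun k _ => hper k
      have hsum3 : ∑ k : Fin K, (u k + δ - q k) = (K:ℝ) * δ := by
        rw [Finset.sum_sub_distrib, Finset.sum_add_distrib, hw1, hqsum,
          Finset.sum_const]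
        simp [nsmul_eq_mul]
      have h3 : ∑ k, ((u k + δ - q k) - (u k + δ - q k)^2/6) =
          (K:ℝ) * δ - (∑ k, (u k + δ - q k)^2)/6 := by
        rw [Finset.sum_sub_distrib, hsum3, ← Finset.sum_div]
      have h4 : (0:ℝ) ≤ (n:ℝ) * ((K:ℝ) * δ - (∑ k, (u k + δ - q k)^2)/6) := by
        rw [← h3]; linarith
      have h5 : (0:ℝ) ≤ (K:ℝ) * δ - (∑ k, (u k + δ - q k)^2)/6 := by
        nlinarith
      linarith
    have hk2 : (u k + δ - q k)^2 ≤ 6 * K * δ := by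
      calc (u k + δ - q k)^2 ≤ ∑ j, (u j + δ - q j)^2 :=
            Finset.single_le_sum (f := fun j => (u j + δ - q j)^2)
              (fun j _ => sq_nonneg _) (mem_univ k)
        _ ≤ 6 * K * δ := hT
    have habs : |u k + δ - q k| ≤ Real.sqrt (6*K*δ) := by
      rw [← Real.sqrt_sq_eq_abs]
      exact Real.sqrt_le_sqrt hk2
    calc |w L k - q k| = |(u k + δ - q k) + (-δ)| := by rw [hudef]; ring_nf
      _ ≤ |u k + δ - q k| + |(-δ)| := abs_add_le _ _
      _ ≤ Real.sqrt (6*K*δ) + δ := by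
          rw [abs_neg, abs_of_pos hδ0]
          linarith
  -- conclude the limit
  rw [tendsto_pi_nhds]
  intro k
  have he : Tendsto (fun L : ℝ => Real.exp (-L)) atTop (nhds 0) := by
    exact Real.tendsto_exp_neg_atTop_nhds_zero
  have hb : Tendsto (fun L => Real.sqrt (6*K*Real.exp (-L)) + Real.exp (-L)) atTop (nhds 0) := by
    have h1 : Tendsto (fun L : ℝ => 6*(K:ℝ)*Real.exp (-L)) atTop (nhds 0) := by
      simpa using he.const_mul (6*(K:ℝ))
    have h2 : Tendsto (fun L => Real.sqrt (6*K*Real.exp (-L))) atTop (nhds 0) := by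
      have h := (Real.continuous_sqrt.tendsto 0).comp h1
      rw [Real.sqrt_zero] at h
      exact h
    simpa using h2.add he
  have hev : ∀ᶠ L in atTop, ‖w L k - q k‖ ≤ Real.sqrt (6*K*Real.exp (-L)) + Real.exp (-L) := by
    filter_upwards [eventually_ge_atTop (Real.log K)] with L hL
    have : (K:ℝ) * Real.exp (-L) ≤ 1 := by
      have h1 : Real.exp (-L) ≤ Real.exp (-(Real.log K)) := Real.exp_le_exp.mpr (by linarith)
      have h2 : Real.exp (-(Real.log K)) = (K:ℝ)⁻¹ := by
        rw [Real.exp_neg, Real.exp_log hKpos]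
      rw [h2] at h1
      calc (K:ℝ) * Real.exp (-L) ≤ (K:ℝ) * (K:ℝ)⁻¹ :=
            mul_le_mul_of_nonneg_left h1 hKpos.le
        _ = 1 := mul_inv_cancel₀ hKpos.ne'
    simpa using key L this k
  have h0 : Tendsto (fun L => w L k - q k) atTop (nhds 0) := squeeze_zero_norm' hev hb
  have := h0.add_const (q k)
  simpa using this
end

section
/- Let μ be a probability measure on a space X (covariate distribution), and for each x ∈ X let k*(x) ∈ {1,…,K} be measurable. Suppose for each x and each k ≠ k*(x) a measurable bound u_{x,k} ∈ [0, e^{−L}] holds, where u_{x,k}(y) = p_k(y|x)/p_{k*(x)}(y|x) ≤ e^{−L} for all y in a set of conditional probability ≥ p_0. Then for any simplex weight vector w, the objective ∫∫ log(∑_k w_k p_k(y|x)) dP_t(y|x) dμ(x) differs from ∫ log(w_{k*(x)}) dμ(x) + C_0 by at most an error term that tends to 0 as p_0 → 1 and L → ∞, where C_0 = ∫∫ log p_{k*(x)}(y|x) dP_t(y|x) dμ(x), provided the log predictive densities are uniformly integrable. -/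
open MeasureTheory Finset

set_option maxHeartbeats 1000000 in
private lemma stacking_inner_bound {Y : Type*} [MeasurableSpace Y]
    (ν : Measure Y) [IsProbabilityMeasure ν]
    (K : ℕ) (hK : 1 ≤ K) (pk : Fin K → Y → ℝ) (hp : ∀ k y, 0 < pk k y)
    (w : Fin K → ℝ) (hw0 : ∀ k, 0 < w k) (hw1 : ∑ k, w k = 1)
    (wmin : ℝ) (hwmin_pos : 0 < wmin) (hwmin_le : ∀ k, wmin ≤ w k)
    (k0 : Fin K)
    (hIℓ : ∀ k, Integrable (fun y => Real.log (pk k y)) ν)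
    (L p₀ δ ε : ℝ) (hδpos : 0 < δ) (hp₀δ : 1 - p₀ ≤ δ) (hε : 0 < ε)
    (hexpL : Real.exp (-L) ≤ wmin * (ε / 4))
    (hsep : ENNReal.ofReal p₀ ≤
      ν {y | ∀ k, k ≠ k0 → Real.log (pk k y) + L ≤ Real.log (pk k0 y)})
    (hUIx : ∀ k, ∀ s : Set Y, ν s ≤ ENNReal.ofReal δ →
      ∫ y in s, |Real.log (pk k y)| ∂ν ≤ ε / (8 * K))
    (hδA : δ * (Real.log K + |Real.log wmin|) ≤ ε / 4) :
    0 ≤ (∫ y, Real.log (∑ k, w k * pk k y) ∂ν) - Real.log (w k0) -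
        ∫ y, Real.log (pk k0 y) ∂ν ∧
    (∫ y, Real.log (∑ k, w k * pk k y) ∂ν) - Real.log (w k0) -
        ∫ y, Real.log (pk k0 y) ∂ν ≤ 3 * (ε / 4) := by
  have hne : Nonempty (Fin K) := ⟨⟨0, hK⟩⟩
  have hKpos : (1:ℝ) ≤ K := by exact_mod_cast hK
  have hlogK : (0:ℝ) ≤ Real.log K := Real.log_nonneg hKpos
  have hwle1 : ∀ k, w k ≤ 1 := by
    intro k
    calc w k ≤ ∑ j, w j := Finset.single_le_sum (fun j _ => (hw0 j).le) (Finset.mem_univ k)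
      _ = 1 := hw1
  have hwmin_le1 : wmin ≤ 1 := (hwmin_le k0).trans (hwle1 _)
  have hlogw_abs : ∀ k, |Real.log (w k)| ≤ |Real.log wmin| := by
    intro k
    rw [abs_of_nonpos (Real.log_nonpos (hw0 k).le (hwle1 k)),
      abs_of_nonpos (Real.log_nonpos hwmin_pos.le hwmin_le1)]
    exact neg_le_neg (Real.log_le_log hwmin_pos (hwmin_le k))
  set ℓ : Fin K → Y → ℝ := fun k y => Real.log (pk k y) with hℓ_def
  set f : Fin K → Y → ℝ := fun k => ((hIℓ k).1.mk _) with hf_def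
  have hfmeas : ∀ k, Measurable (f k) := fun k => (hIℓ k).1.stronglyMeasurable_mk.measurable
  have hfeq : ∀ k, ℓ k =ᵐ[ν] f k := fun k => (hIℓ k).1.ae_eq_mk
  have hae : ∀ᵐ y ∂ν, ∀ k, ℓ k y = f k y := ae_all_iff.2 hfeq
  set T : Set Y := {y | ∀ k, k ≠ k0 → f k y + L ≤ f k0 y} with hT_def
  have hT : MeasurableSet T := by
    have : T = ⋂ k, ⋂ (_ : k ≠ k0), {y | f k y + L ≤ f k0 y} := by
      ext y; simp [hT_def, Set.mem_iInter]
    rw [this]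
    exact MeasurableSet.iInter fun k => MeasurableSet.iInter fun _ =>
      measurableSet_le ((hfmeas k).add_const L) (hfmeas k0)
  have hTmeas : ENNReal.ofReal p₀ ≤ ν T := by
    refine le_trans hsep (le_of_eq (measure_congr ?_))
    refine Filter.eventuallyEq_set.2 (hae.mono fun y hy => ?_)
    constructor
    · intro h k hk
      have h3 : ℓ k y + L ≤ ℓ k0 y := h k hk
      rw [hy k, hy k0] at h3; exact h3
    · intro h k hk
      have h3 := h k hk
      show ℓ k y + L ≤ ℓ k0 y
      rw [hy k, hy k0]; exact h3
  set q : Y → ℝ := fun y => ∑ k, w k * pk k y with hq_def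
  have hq_pos : ∀ y, 0 < q y :=
    fun y => Finset.sum_pos (fun k _ => mul_pos (hw0 k) (hp k y)) Finset.univ_nonempty
  have hq_lb : ∀ y, w k0 * pk k0 y ≤ q y := fun y =>
    Finset.single_le_sum (f := fun k => w k * pk k y)
      (fun k _ => (mul_pos (hw0 k) (hp k y)).le) (Finset.mem_univ k0)
  have pexp : ∀ k y, pk k y = Real.exp (ℓ k y) := fun k y => (Real.exp_log (hp k y)).symm
  have haesm_q : AEStronglyMeasurable (fun y => Real.log (q y)) ν := by
    have hqm : AEMeasurable q ν := by
      have : q = fun y => ∑ k, w k * Real.exp (ℓ k y) := by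
        funext y; exact Finset.sum_congr rfl fun k _ => by rw [← pexp]
      rw [this]
      exact Finset.aemeasurable_fun_sum _ fun k _ =>
        ((Real.measurable_exp.comp_aemeasurable (hIℓ k).1.aemeasurable).const_mul (w k))
    exact (Real.measurable_log.comp_aemeasurable hqm).aestronglyMeasurable
  have hlogq_ub : ∀ y, Real.log (q y) ≤ Real.log K + ∑ k, |ℓ k y| := by
    intro y
    have h1 : q y ≤ (K : ℝ) * Real.exp (∑ k, |ℓ k y|) := by
      calc q y ≤ ∑ k : Fin K, Real.exp (∑ j, |ℓ j y|) := by
            refine Finset.sum_le_sum fun k _ => ?_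
            calc w k * pk k y ≤ 1 * pk k y :=
                  mul_le_mul_of_nonneg_right (hwle1 k) (hp k y).le
              _ = Real.exp (ℓ k y) := by rw [one_mul, pexp]
              _ ≤ Real.exp (∑ j, |ℓ j y|) := Real.exp_le_exp.2 <|
                  (le_abs_self _).trans
                    (Finset.single_le_sum (f := fun j => |ℓ j y|)
                      (fun j _ => abs_nonneg _) (Finset.mem_univ k))
        _ = (K : ℝ) * Real.exp (∑ j, |ℓ j y|) := by
            rw [Finset.sum_const, Finset.card_univ, Fintype.card_fin, nsmul_eq_mul]
    calc Real.log (q y) ≤ Real.log ((K : ℝ) * Real.exp (∑ k, |ℓ k y|)) :=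
          Real.log_le_log (hq_pos y) h1
      _ = Real.log K + ∑ k, |ℓ k y| := by
          rw [Real.log_mul (by positivity) (Real.exp_pos _).ne', Real.log_exp]
  have hlogq_lb : ∀ y, Real.log (w k0) + ℓ k0 y ≤ Real.log (q y) := by
    intro y
    calc Real.log (w k0) + ℓ k0 y = Real.log (w k0 * pk k0 y) := by
          rw [Real.log_mul (hw0 k0).ne' (hp k0 y).ne']
      _ ≤ Real.log (q y) := Real.log_le_log (mul_pos (hw0 k0) (hp k0 y)) (hq_lb y)
  set G : Y → ℝ := fun y => Real.log K + |Real.log wmin| + ∑ k, |ℓ k y| with hG_def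
  have hGint : Integrable G ν :=
    (integrable_const _).add (integrable_finset_sum _ fun k _ => (hIℓ k).abs)
  have habs_logq : ∀ y, |Real.log (q y)| ≤ G y := by
    intro y
    rw [abs_le]
    constructor
    · have h1 := hlogq_lb y
      have h2 : -|Real.log wmin| ≤ Real.log (w k0) := by
        have := hlogw_abs k0; linarith [neg_abs_le (Real.log (w k0))]
      have h3 : -|ℓ k0 y| ≤ ℓ k0 y := neg_abs_le _
      have h4 : |ℓ k0 y| ≤ ∑ k, |ℓ k y| :=
        Finset.single_le_sum (f := fun j => |ℓ j y|) (fun j _ => abs_nonneg _)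
          (Finset.mem_univ k0)
      simp only [hG_def]; linarith
    · have h1 := hlogq_ub y
      have h2 := abs_nonneg (Real.log wmin)
      simp only [hG_def]; linarith
  have hIlogq : Integrable (fun y => Real.log (q y)) ν :=
    hGint.mono' haesm_q (ae_of_all _ fun y => by
      rw [Real.norm_eq_abs]; exact habs_logq y)
  set h : Y → ℝ := fun y => Real.log (q y) - ℓ k0 y - Real.log (w k0) with hh_def
  have hInth : Integrable h ν := (hIlogq.sub (hIℓ k0)).sub (integrable_const _)
  have hh_nonneg : ∀ y, 0 ≤ h y := by
    intro y; have := hlogq_lb y; simp only [hh_def]; linarith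
  have hh_ub : ∀ y, h y ≤ Real.log K + |Real.log wmin| + 2 * ∑ k, |ℓ k y| := by
    intro y
    have h1 := hlogq_ub y
    have h2 : -|ℓ k0 y| ≤ ℓ k0 y := neg_abs_le _
    have h3 : |ℓ k0 y| ≤ ∑ k, |ℓ k y| :=
      Finset.single_le_sum (f := fun j => |ℓ j y|) (fun j _ => abs_nonneg _)
        (Finset.mem_univ k0)
    have h4 := hlogw_abs k0
    have h5 : -|Real.log (w k0)| ≤ Real.log (w k0) := neg_abs_le _
    simp only [hh_def]; linarith
  -- bound on T
  have hTbound : ∫ y in T, h y ∂ν ≤ ε / 4 := by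
    have hptw : ∀ᵐ y ∂ν.restrict T, h y ≤ ε / 4 := by
      filter_upwards [ae_restrict_of_ae hae, ae_restrict_mem hT] with y hy hyT
      have hq_ub : q y ≤ (w k0 + Real.exp (-L)) * pk k0 y := by
        have hsplit : q y = w k0 * pk k0 y + ∑ k ∈ Finset.univ.erase k0, w k * pk k y :=
          (Finset.add_sum_erase _ _ (Finset.mem_univ k0)).symm
        have hterm : ∀ k ∈ Finset.univ.erase k0,
            w k * pk k y ≤ w k * (Real.exp (-L) * pk k0 y) := by
          intro k hk
          have hk' : k ≠ k0 := (Finset.mem_erase.1 hk).1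
          have h5 := hyT k hk'
          rw [← hy k, ← hy k0] at h5
          have hpk : pk k y ≤ Real.exp (-L) * pk k0 y := by
            rw [pexp k y, pexp k0 y, ← Real.exp_add]
            exact Real.exp_le_exp.2 (by linarith)
          exact mul_le_mul_of_nonneg_left hpk (hw0 k).le
        have hsum : ∑ k ∈ Finset.univ.erase k0, w k * pk k y ≤
            (∑ k ∈ Finset.univ.erase k0, w k) * (Real.exp (-L) * pk k0 y) := by
          rw [Finset.sum_mul]
          exact Finset.sum_le_sum hterm
        have hwsum : ∑ k ∈ Finset.univ.erase k0, w k ≤ 1 := by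
          rw [← hw1]
          exact Finset.sum_le_sum_of_subset_of_nonneg (Finset.erase_subset _ _)
            (fun k _ _ => (hw0 k).le)
        have h6 : (∑ k ∈ Finset.univ.erase k0, w k) * (Real.exp (-L) * pk k0 y) ≤
            Real.exp (-L) * pk k0 y :=
          mul_le_of_le_one_left (mul_pos (Real.exp_pos _) (hp k0 y)).le hwsum
        calc q y = w k0 * pk k0 y + ∑ k ∈ Finset.univ.erase k0, w k * pk k y := hsplit
          _ ≤ w k0 * pk k0 y + Real.exp (-L) * pk k0 y := by linarith
          _ = (w k0 + Real.exp (-L)) * pk k0 y := by ring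
      have hlog : Real.log (q y) ≤ Real.log (w k0 + Real.exp (-L)) + ℓ k0 y := by
        calc Real.log (q y) ≤ Real.log ((w k0 + Real.exp (-L)) * pk k0 y) :=
              Real.log_le_log (hq_pos y) hq_ub
          _ = Real.log (w k0 + Real.exp (-L)) + ℓ k0 y := by
              rw [Real.log_mul (add_pos (hw0 k0) (Real.exp_pos _)).ne' (hp k0 y).ne']
      have hlogdiff : Real.log (w k0 + Real.exp (-L)) - Real.log (w k0) ≤
          Real.exp (-L) / w k0 := by
        rw [← Real.log_div (add_pos (hw0 k0) (Real.exp_pos _)).ne' (hw0 k0).ne']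
        have h7 : (w k0 + Real.exp (-L)) / w k0 = 1 + Real.exp (-L) / w k0 := by
          rw [add_div, div_self (hw0 k0).ne']
        rw [h7]
        have hpos7 : (0:ℝ) < 1 + Real.exp (-L) / w k0 := by
          have : 0 < Real.exp (-L) / w k0 := div_pos (Real.exp_pos _) (hw0 k0)
          linarith
        have := Real.log_le_sub_one_of_pos hpos7
        linarith
      have hfin : Real.exp (-L) / w k0 ≤ ε / 4 := by
        rw [div_le_iff₀ (hw0 k0)]
        calc Real.exp (-L) ≤ wmin * (ε / 4) := hexpL
          _ ≤ w k0 * (ε / 4) := by nlinarith [hwmin_le k0]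
          _ = ε / 4 * w k0 := by ring
      simp only [hh_def]; linarith
    calc ∫ y in T, h y ∂ν ≤ ∫ _ in T, (ε / 4) ∂ν :=
          integral_mono_ae hInth.restrict (integrable_const _) hptw
      _ = (ν T).toReal * (ε / 4) := by rw [setIntegral_const]; rfl
      _ ≤ 1 * (ε / 4) := by
          have h8 : (ν T).toReal ≤ 1 :=
            ENNReal.toReal_le_of_le_ofReal zero_le_one (by simpa using prob_le_one)
          nlinarith
      _ = ε / 4 := one_mul _
  -- measure of the complement
  have hTc : ν Tᶜ ≤ ENNReal.ofReal δ := by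
    have h1 : ν Tᶜ = 1 - ν T := by
      rw [measure_compl hT (measure_ne_top _ _), measure_univ]
    rw [h1]
    calc (1 : ENNReal) - ν T ≤ 1 - ENNReal.ofReal p₀ := tsub_le_tsub_left hTmeas 1
      _ ≤ ENNReal.ofReal (1 - p₀) := by
          rw [tsub_le_iff_right]
          calc (1 : ENNReal) = ENNReal.ofReal ((1 - p₀) + p₀) := by norm_num
            _ ≤ ENNReal.ofReal (1 - p₀) + ENNReal.ofReal p₀ := ENNReal.ofReal_add_le
      _ ≤ ENNReal.ofReal δ := ENNReal.ofReal_le_ofReal (by linarith)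
  have hTcReal : (ν Tᶜ).toReal ≤ δ := ENNReal.toReal_le_of_le_ofReal hδpos.le hTc
  -- bound on Tᶜ
  have hTcbound : ∫ y in Tᶜ, h y ∂ν ≤ ε / 4 + ε / 4 := by
    have hIbd : Integrable (fun y => Real.log K + |Real.log wmin| + 2 * ∑ k, |ℓ k y|)
        (ν.restrict Tᶜ) :=
      ((integrable_const _).add ((integrable_finset_sum _ fun k _ =>
        (hIℓ k).abs).const_mul 2)).restrict
    have step1 : ∫ y in Tᶜ, h y ∂ν ≤
        ∫ y in Tᶜ, (Real.log K + |Real.log wmin| + 2 * ∑ k, |ℓ k y|) ∂ν :=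
      integral_mono_ae hInth.restrict hIbd (ae_of_all _ hh_ub)
    have step2 : ∫ y in Tᶜ, (Real.log K + |Real.log wmin| + 2 * ∑ k, |ℓ k y|) ∂ν =
        (ν Tᶜ).toReal * (Real.log K + |Real.log wmin|) +
          2 * ∑ k, ∫ y in Tᶜ, |ℓ k y| ∂ν := by
      rw [integral_add (integrable_const _) ((integrable_finset_sum _ fun k _ =>
        (hIℓ k).abs).const_mul 2).restrict, integral_const,
        integral_const_mul, integral_finset_sum _ fun k _ => (hIℓ k).abs.restrict]
      simp [smul_eq_mul, Measure.real, hℓ_def]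
    have hsum_le : ∑ k, ∫ y in Tᶜ, |ℓ k y| ∂ν ≤ ∑ _k : Fin K, (ε / (8 * K)) :=
      Finset.sum_le_sum fun k _ => hUIx k Tᶜ hTc
    have hc : 0 ≤ Real.log K + |Real.log wmin| := by positivity
    have step3 : (ν Tᶜ).toReal * (Real.log K + |Real.log wmin|) ≤ ε / 4 := by
      calc (ν Tᶜ).toReal * (Real.log K + |Real.log wmin|) ≤
          δ * (Real.log K + |Real.log wmin|) :=
            mul_le_mul_of_nonneg_right hTcReal hc
        _ ≤ ε / 4 := hδA
    have step4 : 2 * ∑ _k : Fin K, (ε / (8 * K)) = ε / 4 := by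
      rw [Finset.sum_const, Finset.card_univ, Fintype.card_fin, nsmul_eq_mul]
      have hK0 : (K:ℝ) ≠ 0 := by positivity
      field_simp
      ring
    have step5 : 2 * ∑ k, ∫ y in Tᶜ, |ℓ k y| ∂ν ≤ ε / 4 := by
      rw [← step4]; linarith
    linarith [step1, step2.le, step2.ge, step3, step5]
  -- combine
  have hsplit : ∫ y, h y ∂ν = (∫ y in T, h y ∂ν) + ∫ y in Tᶜ, h y ∂ν :=
    (integral_add_compl hT hInth).symm
  have hint_h : ∫ y, h y ∂ν =
      (∫ y, Real.log (q y) ∂ν) - (∫ y, ℓ k0 y ∂ν) - Real.log (w k0) := by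
    have e2 : ∫ y, (Real.log (q y) - ℓ k0 y - Real.log (w k0)) ∂ν =
        (∫ y, (Real.log (q y) - ℓ k0 y) ∂ν) - ∫ _y, Real.log (w k0) ∂ν :=
      integral_sub (hIlogq.sub (hIℓ k0)) (integrable_const _)
    have e1 : ∫ y, (Real.log (q y) - ℓ k0 y) ∂ν =
        (∫ y, Real.log (q y) ∂ν) - ∫ y, ℓ k0 y ∂ν :=
      integral_sub hIlogq (hIℓ k0)
    have e0 : ∫ _y, Real.log (w k0) ∂ν = Real.log (w k0) := by
      rw [integral_const, probReal_univ, one_smul]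
    calc ∫ y, h y ∂ν = ∫ y, (Real.log (q y) - ℓ k0 y - Real.log (w k0)) ∂ν := rfl
      _ = (∫ y, Real.log (q y) ∂ν) - (∫ y, ℓ k0 y ∂ν) - Real.log (w k0) := by
          rw [e2, e1, e0]
  have hnn : 0 ≤ ∫ y, h y ∂ν := integral_nonneg hh_nonneg
  have hub : ∫ y, h y ∂ν ≤ 3 * (ε / 4) := by
    rw [hsplit]; linarith
  have hgoal : (∫ y, Real.log (∑ k, w k * pk k y) ∂ν) - Real.log (w k0) -
      (∫ y, Real.log (pk k0 y) ∂ν) =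
      (∫ y, Real.log (q y) ∂ν) - (∫ y, ℓ k0 y ∂ν) - Real.log (w k0) := by
    show (∫ y, Real.log (q y) ∂ν) - Real.log (w k0) - (∫ y, ℓ k0 y ∂ν) = _
    ring
  constructor
  · rw [hgoal, ← hint_h]; exact hnn
  · rw [hgoal, ← hint_h]; exact hub

/-- under the local separable condition (with conditional
probability at least `p₀`, the locally best model beats every other model by a
log-margin `L`), and a uniform-integrability condition on the log predictive
densities, the stacking objective differs from
`∫ log w_{k*(x)} dμ(x) + C₀` by an error that tends to `0` as `p₀ → 1` and
`L → ∞`. -/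
theorem stacking_local_separation_decomposition
    {X Y : Type*} [MeasurableSpace X] [MeasurableSpace Y]
    (μ : Measure X) [IsProbabilityMeasure μ]
    (Pt : X → Measure Y) (hPt : ∀ x, IsProbabilityMeasure (Pt x))
    (K : ℕ) (hK : 1 ≤ K) (p : Fin K → X → Y → ℝ)
    (hp : ∀ k x y, 0 < p k x y)
    (kstar : X → Fin K) (hkstar : Measurable kstar)
    -- uniform integrability of the log predictive densities:
    (hUI : ∀ ε > (0 : ℝ), ∃ δ > (0 : ℝ), ∀ x, ∀ k, ∀ s : Set Y,
      Pt x s ≤ ENNReal.ofReal δ →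
      ∫ y in s, |Real.log (p k x y)| ∂(Pt x) ≤ ε)
    (hIntInner : ∀ x k, Integrable (fun y => Real.log (p k x y)) (Pt x))
    (hIntOuter : ∀ w : Fin K → ℝ, (∀ k, 0 < w k) → ∑ k, w k = 1 →
      Integrable (fun x => ∫ y, Real.log (∑ k, w k * p k x y) ∂(Pt x)) μ)
    (hC0 : Integrable (fun x => ∫ y, Real.log (p (kstar x) x y) ∂(Pt x)) μ)
    (w : Fin K → ℝ) (hw0 : ∀ k, 0 < w k) (hw1 : ∑ k, w k = 1) :
    ∀ ε > (0 : ℝ), ∃ δ > (0 : ℝ), ∃ L₀ : ℝ, ∀ L ≥ L₀, ∀ p₀ : ℝ, 1 - δ ≤ p₀ →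
      -- the local separable condition with margin `L` and probability `p₀`:
      (∀ x, ENNReal.ofReal p₀ ≤
        Pt x {y | ∀ k, k ≠ kstar x →
          Real.log (p k x y) + L ≤ Real.log (p (kstar x) x y)}) →
      |(∫ x, ∫ y, Real.log (∑ k, w k * p k x y) ∂(Pt x) ∂μ) -
        ((∫ x, Real.log (w (kstar x)) ∂μ) +
          ∫ x, ∫ y, Real.log (p (kstar x) x y) ∂(Pt x) ∂μ)| ≤ ε := by
  intro ε hε
  have hne : Nonempty (Fin K) := ⟨⟨0, hK⟩⟩
  have hKpos : (1:ℝ) ≤ K := by exact_mod_cast hK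
  set wmin : ℝ := Finset.univ.inf' Finset.univ_nonempty w with hwmin_def
  have hwmin_le : ∀ k, wmin ≤ w k := fun k => Finset.inf'_le _ (Finset.mem_univ k)
  have hwmin_pos : 0 < wmin := by
    obtain ⟨k0, _, hk0⟩ := Finset.exists_mem_eq_inf' Finset.univ_nonempty w
    rw [hwmin_def, hk0]; exact hw0 k0
  have hwle1 : ∀ k, w k ≤ 1 := by
    intro k
    calc w k ≤ ∑ j, w j := Finset.single_le_sum (fun j _ => (hw0 j).le) (Finset.mem_univ k)
      _ = 1 := hw1
  have hwmin_le1 : wmin ≤ 1 := (hwmin_le ⟨0, hK⟩).trans (hwle1 _)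
  have hlogw_abs : ∀ k, |Real.log (w k)| ≤ |Real.log wmin| := by
    intro k
    rw [abs_of_nonpos (Real.log_nonpos (hw0 k).le (hwle1 k)),
      abs_of_nonpos (Real.log_nonpos hwmin_pos.le hwmin_le1)]
    exact neg_le_neg (Real.log_le_log hwmin_pos (hwmin_le k))
  set A : ℝ := Real.log K + |Real.log wmin| + 1 with hA_def
  have hlogK : (0:ℝ) ≤ Real.log K := Real.log_nonneg hKpos
  have hApos : 0 < A := by positivity
  obtain ⟨δ₁, hδ₁pos, hδ₁⟩ := hUI (ε / (8 * K)) (by positivity)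
  refine ⟨min δ₁ (ε / (4 * A)), by positivity, -Real.log (wmin * (ε / 4)), ?_⟩
  intro L hL p₀ hp₀ hsep
  set δ := min δ₁ (ε / (4 * A)) with hδ_def
  have hδpos : 0 < δ := by positivity
  have hexpL : Real.exp (-L) ≤ wmin * (ε / 4) := by
    have h1 : Real.exp (-L) ≤ Real.exp (Real.log (wmin * (ε / 4))) :=
      Real.exp_le_exp.2 (by linarith)
    rwa [Real.exp_log (by positivity)] at h1
  have hδA : δ * (Real.log K + |Real.log wmin|) ≤ ε / 4 := by
    have h9 : δ ≤ ε / (4 * A) := min_le_right _ _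
    have h12 : δ * (Real.log K + |Real.log wmin|) ≤ (ε / (4 * A)) * A :=
      mul_le_mul h9 (by rw [hA_def]; linarith) (by positivity) (by positivity)
    have h13 : (ε / (4 * A)) * A = ε / 4 := by
      field_simp
    linarith
  have key : ∀ x : X,
      0 ≤ (∫ y, Real.log (∑ k, w k * p k x y) ∂(Pt x)) - Real.log (w (kstar x)) -
          ∫ y, Real.log (p (kstar x) x y) ∂(Pt x) ∧
      (∫ y, Real.log (∑ k, w k * p k x y) ∂(Pt x)) - Real.log (w (kstar x)) -
          ∫ y, Real.log (p (kstar x) x y) ∂(Pt x) ≤ 3 * (ε / 4) := by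
    intro x
    haveI := hPt x
    refine stacking_inner_bound (Pt x) K hK (fun k y => p k x y) (fun k y => hp k x y)
      w hw0 hw1 wmin hwmin_pos hwmin_le (kstar x) (fun k => hIntInner x k)
      L p₀ δ ε hδpos (by linarith) hε hexpL (hsep x) ?_ hδA
    intro k s hs
    exact hδ₁ x k s (hs.trans (ENNReal.ofReal_le_ofReal (min_le_left _ _)))
  have hIntW : Integrable (fun x => Real.log (w (kstar x))) μ := by
    refine (integrable_const |Real.log wmin|).mono' ?_ (ae_of_all _ fun x => ?_)
    · exact ((Measurable.of_discrete (f := fun k : Fin K => Real.log (w k))).comp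
        hkstar).aestronglyMeasurable
    · rw [Real.norm_eq_abs]; exact hlogw_abs (kstar x)
  have hIntD : Integrable (fun x => (∫ y, Real.log (∑ k, w k * p k x y) ∂(Pt x)) -
      Real.log (w (kstar x)) - ∫ y, Real.log (p (kstar x) x y) ∂(Pt x)) μ :=
    ((hIntOuter w hw0 hw1).sub hIntW).sub hC0
  have hrw : (∫ x, ∫ y, Real.log (∑ k, w k * p k x y) ∂(Pt x) ∂μ) -
      ((∫ x, Real.log (w (kstar x)) ∂μ) +
        ∫ x, ∫ y, Real.log (p (kstar x) x y) ∂(Pt x) ∂μ) =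
      ∫ x, ((∫ y, Real.log (∑ k, w k * p k x y) ∂(Pt x)) - Real.log (w (kstar x)) -
        ∫ y, Real.log (p (kstar x) x y) ∂(Pt x)) ∂μ := by
    have e2 : ∫ x, ((∫ y, Real.log (∑ k, w k * p k x y) ∂(Pt x)) - Real.log (w (kstar x)) -
        ∫ y, Real.log (p (kstar x) x y) ∂(Pt x)) ∂μ =
        (∫ x, ((∫ y, Real.log (∑ k, w k * p k x y) ∂(Pt x)) - Real.log (w (kstar x))) ∂μ) -
          ∫ x, ∫ y, Real.log (p (kstar x) x y) ∂(Pt x) ∂μ :=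
      integral_sub ((hIntOuter w hw0 hw1).sub hIntW) hC0
    have e1 : ∫ x, ((∫ y, Real.log (∑ k, w k * p k x y) ∂(Pt x)) - Real.log (w (kstar x))) ∂μ =
        (∫ x, ∫ y, Real.log (∑ k, w k * p k x y) ∂(Pt x) ∂μ) -
          ∫ x, Real.log (w (kstar x)) ∂μ :=
      integral_sub (hIntOuter w hw0 hw1) hIntW
    rw [e2, e1]
    ring
  rw [hrw, abs_le]
  constructor
  · have h0 : 0 ≤ ∫ x, ((∫ y, Real.log (∑ k, w k * p k x y) ∂(Pt x)) -
        Real.log (w (kstar x)) - ∫ y, Real.log (p (kstar x) x y) ∂(Pt x)) ∂μ :=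
      integral_nonneg fun x => (key x).1
    linarith
  · calc ∫ x, ((∫ y, Real.log (∑ k, w k * p k x y) ∂(Pt x)) - Real.log (w (kstar x)) -
        ∫ y, Real.log (p (kstar x) x y) ∂(Pt x)) ∂μ
        ≤ ∫ _x, 3 * (ε / 4) ∂μ :=
          integral_mono hIntD (integrable_const _) fun x => (key x).2
      _ = 3 * (ε / 4) := by simp
      _ ≤ ε := by linarith
end

section
/- Under the local separable condition with p_0 = 1 and in the limit L → ∞ (so that p_k(y|x)/p_{k*(x)}(y|x) → 0 for all k ≠ k*(x), P_t-almost surely), the stacking weights maximizing ∫∫ log(∑_k w_k p_k(y|x)) dP_t(y|x) dμ(x) over the simplex converge to w_k = μ({x : k*(x) = k}), i.e., the probability (over the covariate distribution) that model k is the locally best model. -/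
open MeasureTheory Finset Filter

lemma log_diff_le {s t : ℝ} (hs : 0 < s) (ht : 0 < t) :
    Real.log t - Real.log s ≤ (t - s) / s := by
  rw [← Real.log_div ht.ne' hs.ne']
  have h := Real.log_le_sub_one_of_pos (div_pos ht hs)
  have h2 : t / s - 1 = (t - s) / s := by field_simp
  linarith

lemma phi_lower_hi {δ t : ℝ} (hδ : 0 < δ) (h : 1 + δ ≤ t) :
    δ - Real.log (1 + δ) ≤ t - 1 - Real.log t := by
  have hs : (0:ℝ) < 1 + δ := by linarith
  have ht : (0:ℝ) < t := by linarith
  have h1 := log_diff_le hs ht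
  have h2 : (t - (1 + δ)) / (1 + δ) ≤ t - (1 + δ) :=
    div_le_self (by linarith) (by linarith)
  linarith

lemma phi_lower_lo {δ t : ℝ} (hδ : 0 < δ) (hδ1 : δ < 1) (ht : 0 < t) (h : t ≤ 1 - δ) :
    -δ - Real.log (1 - δ) ≤ t - 1 - Real.log t := by
  have hs : (0:ℝ) < 1 - δ := by linarith
  have h1 := log_diff_le hs ht
  have h2 : (t - (1 - δ)) / (1 - δ) ≤ t - (1 - δ) := by
    rw [div_le_iff₀ hs]
    nlinarith
  linarith

lemma integral_comp_fiber {X : Type*} [MeasurableSpace X] (μ : Measure X)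
    [IsFiniteMeasure μ] {K : ℕ} (kstar : X → Fin K) (hk : Measurable kstar)
    (f : Fin K → ℝ) :
    Integrable (fun x => f (kstar x)) μ ∧
    ∫ x, f (kstar x) ∂μ = ∑ k, (μ {x | kstar x = k}).toReal * f k := by
  have hset : ∀ k : Fin K, MeasurableSet {x | kstar x = k} := fun k =>
    hk (measurableSet_singleton k)
  have heq : (fun x => f (kstar x)) =
      fun x => ∑ k, Set.indicator {x' | kstar x' = k} (fun _ => f k) x := by
    funext x
    rw [Finset.sum_eq_single (kstar x)]
    · rw [Set.indicator_of_mem]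
      exact rfl
    · intro j _ hj
      apply Set.indicator_of_notMem
      simpa using fun h => hj h.symm
    · simp
  constructor
  · rw [heq]
    exact integrable_finset_sum _ fun k _ => (integrable_const _).indicator (hset k)
  · rw [heq, integral_finset_sum _ fun k _ => (integrable_const _).indicator (hset k)]
    refine Finset.sum_congr rfl fun k _ => ?_
    rw [integral_indicator_const _ (hset k)]
    simp [mul_comm, Measure.real]


set_option maxHeartbeats 1000000 in
/-- Theorem 2: under the local separable condition with `p₀ = 1`
along a family of predictive densities indexed by the margin `L → ∞`, any
maximizers of the stacking objective converge to the probabilities (over the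
covariate distribution) that each model is the locally best model. -/
theorem stacking_weights_local_best_probability
    {X Y : Type*} [MeasurableSpace X] [MeasurableSpace Y]
    (μ : Measure X) [IsProbabilityMeasure μ]
    (Pt : X → Measure Y) (hPt : ∀ x, IsProbabilityMeasure (Pt x))
    (K : ℕ) (hK : 1 ≤ K)
    (p : ℝ → Fin K → X → Y → ℝ) (hp : ∀ L k x y, 0 < p L k x y)
    (kstar : X → Fin K) (hkstar : Measurable kstar)
    (hposk : ∀ k : Fin K, 0 < μ {x | kstar x = k})
    -- local best model: `kstar x` maximizes the local expected log density, uniquely μ-a.e.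
    (hlocal : ∀ L, ∀ᵐ x ∂μ, ∀ k, k ≠ kstar x →
      ∫ y, Real.log (p L k x y) ∂(Pt x) < ∫ y, Real.log (p L (kstar x) x y) ∂(Pt x))
    -- local separable condition with probability `p₀ = 1` and margin `L`:
    (hsep : ∀ L, ∀ᵐ x ∂μ, ∀ᵐ y ∂(Pt x), ∀ k, k ≠ kstar x →
      Real.log (p L k x y) + L ≤ Real.log (p L (kstar x) x y))
    -- integrability so that all objectives are well defined:
    (hInt : ∀ L, ∀ w : Fin K → ℝ, (∀ k, 0 ≤ w k) → ∑ k, w k = 1 →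
      (∀ x, Integrable (fun y => Real.log (∑ k, w k * p L k x y)) (Pt x)) ∧
      Integrable (fun x => ∫ y, Real.log (∑ k, w k * p L k x y) ∂(Pt x)) μ)
    (w : ℝ → Fin K → ℝ)
    (hwsimplex : ∀ L, (∀ k, 0 ≤ w L k) ∧ ∑ k, w L k = 1)
    (hwmax : ∀ L, ∀ v : Fin K → ℝ, (∀ k, 0 ≤ v k) → ∑ k, v k = 1 →
      ∫ x, ∫ y, Real.log (∑ k, v k * p L k x y) ∂(Pt x) ∂μ ≤
        ∫ x, ∫ y, Real.log (∑ k, w L k * p L k x y) ∂(Pt x) ∂μ) :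
    Tendsto w atTop (nhds (fun k => (μ {x | kstar x = k}).toReal)) := by
  classical
  set v : Fin K → ℝ := fun k => (μ {x | kstar x = k}).toReal with hv
  have hvpos : ∀ k, 0 < v k := fun k =>
    ENNReal.toReal_pos (hposk k).ne' (measure_ne_top μ _)
  have hvnonneg : ∀ k, 0 ≤ v k := fun k => (hvpos k).le
  -- v sums to 1
  have hvsum : ∑ k, v k = 1 := by
    have h := (integral_comp_fiber μ kstar hkstar (fun _ => (1:ℝ))).2
    simp only [integral_const, Measure.real, measure_univ, ENNReal.toReal_one, one_smul, mul_one] at h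
    exact h.symm
  -- The key inequality for each margin L
  have key : ∀ L : ℝ, 0 ≤ ∑ k, v k *
      (Real.log (w L k + Real.exp (-L)) - Real.log (v k)) := by
    intro L
    set ε := Real.exp (-L) with hε
    have hεpos : 0 < ε := Real.exp_pos _
    obtain ⟨hwn, hws⟩ := hwsimplex L
    -- a.e. pointwise comparison
    have hae : ∀ᵐ x ∂μ,
        (∫ y, Real.log (∑ k, w L k * p L k x y) ∂(Pt x)) -
        (∫ y, Real.log (∑ k, v k * p L k x y) ∂(Pt x)) ≤
        Real.log (w L (kstar x) + ε) - Real.log (v (kstar x)) := by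
      filter_upwards [hsep L] with x hx
      haveI := hPt x
      have hyae : ∀ᵐ y ∂(Pt x),
          Real.log (∑ k, w L k * p L k x y) - Real.log (∑ k, v k * p L k x y) ≤
          Real.log (w L (kstar x) + ε) - Real.log (v (kstar x)) := by
        filter_upwards [hx] with y hy
        set ps := p L (kstar x) x y with hps
        have hpspos : 0 < ps := hp L (kstar x) x y
        have hple : ∀ k, k ≠ kstar x → p L k x y ≤ ε * ps := by
          intro k hk
          have h1 := hy k hk
          have h2 : p L k x y = Real.exp (Real.log (p L k x y)) :=
            (Real.exp_log (hp L k x y)).symm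
          have h3 : Real.exp (Real.log (p L k x y)) ≤
              Real.exp (Real.log ps - L) := Real.exp_le_exp.mpr (by linarith)
          rw [Real.exp_sub, Real.exp_log hpspos] at h3
          rw [h2]
          calc Real.exp (Real.log (p L k x y)) ≤ ps / Real.exp L := h3
            _ = ε * ps := by rw [hε, Real.exp_neg]; field_simp
        -- upper bound for the w L mixture
        have hupper : ∑ k, w L k * p L k x y ≤ (w L (kstar x) + ε) * ps := by
          rw [← Finset.sum_erase_add _ _ (Finset.mem_univ (kstar x))]
          have h1 : ∑ k ∈ Finset.univ.erase (kstar x), w L k * p L k x y ≤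
              ∑ k ∈ Finset.univ.erase (kstar x), w L k * (ε * ps) := by
            refine Finset.sum_le_sum fun k hk => ?_
            exact mul_le_mul_of_nonneg_left
              (hple k (Finset.ne_of_mem_erase hk)) (hwn k)
          have h2 : ∑ k ∈ Finset.univ.erase (kstar x), w L k * (ε * ps) =
              (∑ k ∈ Finset.univ.erase (kstar x), w L k) * (ε * ps) := by
            rw [← Finset.sum_mul]
          have h3 : ∑ k ∈ Finset.univ.erase (kstar x), w L k ≤ 1 := by
            have := Finset.sum_erase_add Finset.univ (w L)
              (Finset.mem_univ (kstar x))
            have h4 := hwn (kstar x)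
            linarith [hws ▸ this]
          have h5 : (∑ k ∈ Finset.univ.erase (kstar x), w L k) * (ε * ps) ≤
              1 * (ε * ps) := by
            exact mul_le_mul_of_nonneg_right h3 (by positivity)
          nlinarith
        -- lower bound for the v mixture
        have hlower : v (kstar x) * ps ≤ ∑ k, v k * p L k x y := by
          exact Finset.single_le_sum
            (fun k _ => mul_nonneg (hvnonneg k) (hp L k x y).le)
            (Finset.mem_univ (kstar x))
        -- positivity of sums
        have hwLpos : 0 < ∑ k, w L k * p L k x y := by
          obtain ⟨k0, hk0⟩ : ∃ k0, 0 < w L k0 := by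
            by_contra h
            push_neg at h
            have : ∑ k, w L k ≤ 0 := Finset.sum_nonpos fun k _ => h k
            linarith [hws]
          refine Finset.sum_pos' (fun k _ => mul_nonneg (hwn k) (hp L k x y).le)
            ⟨k0, Finset.mem_univ k0, mul_pos hk0 (hp L k0 x y)⟩
        have hvmixpos : 0 < ∑ k, v k * p L k x y :=
          lt_of_lt_of_le (mul_pos (hvpos (kstar x)) hpspos) hlower
        have hub : Real.log (∑ k, w L k * p L k x y) ≤
            Real.log (w L (kstar x) + ε) + Real.log ps := by
          calc Real.log (∑ k, w L k * p L k x y) ≤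
              Real.log ((w L (kstar x) + ε) * ps) := Real.log_le_log hwLpos hupper
            _ = Real.log (w L (kstar x) + ε) + Real.log ps :=
              Real.log_mul (add_pos_of_nonneg_of_pos (hwn _) hεpos).ne' hpspos.ne'
        have hlb : Real.log (v (kstar x)) + Real.log ps ≤
            Real.log (∑ k, v k * p L k x y) := by
          calc Real.log (v (kstar x)) + Real.log ps =
              Real.log (v (kstar x) * ps) :=
              (Real.log_mul (hvpos (kstar x)).ne' hpspos.ne').symm
            _ ≤ Real.log (∑ k, v k * p L k x y) :=
              Real.log_le_log (mul_pos (hvpos (kstar x)) hpspos) hlower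
        linarith
      have hIw := (hInt L (w L) hwn hws).1 x
      have hIv := (hInt L v hvnonneg hvsum).1 x
      rw [← integral_sub hIw hIv]
      calc ∫ y, (Real.log (∑ k, w L k * p L k x y) -
            Real.log (∑ k, v k * p L k x y)) ∂(Pt x) ≤
          ∫ _, (Real.log (w L (kstar x) + ε) - Real.log (v (kstar x))) ∂(Pt x) :=
            integral_mono_ae (hIw.sub hIv) (integrable_const _) hyae
        _ = Real.log (w L (kstar x) + ε) - Real.log (v (kstar x)) := by
            simp [measure_univ]
    -- integrate over x
    have hIF := (hInt L (w L) hwn hws).2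
    have hIG := (hInt L v hvnonneg hvsum).2
    have hcomp := integral_comp_fiber μ kstar hkstar
      (fun k => Real.log (w L k + ε) - Real.log (v k))
    have hstep : (∫ x, ∫ y, Real.log (∑ k, w L k * p L k x y) ∂(Pt x) ∂μ) -
        (∫ x, ∫ y, Real.log (∑ k, v k * p L k x y) ∂(Pt x) ∂μ) ≤
        ∑ k, v k * (Real.log (w L k + ε) - Real.log (v k)) := by
      rw [← integral_sub hIF hIG]
      calc (∫ x, ((∫ y, Real.log (∑ k, w L k * p L k x y) ∂(Pt x)) -
            ∫ y, Real.log (∑ k, v k * p L k x y) ∂(Pt x)) ∂μ) ≤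
          ∫ x, (Real.log (w L (kstar x) + ε) - Real.log (v (kstar x))) ∂μ :=
            integral_mono_ae (hIF.sub hIG) hcomp.1 hae
        _ = ∑ k, v k * (Real.log (w L k + ε) - Real.log (v k)) := hcomp.2
    have hopt := hwmax L v hvnonneg hvsum
    linarith
  -- now the elementary convergence argument
  rw [tendsto_pi_nhds]
  intro k
  rw [Metric.tendsto_nhds]
  intro δ hδ
  set m := v k with hm
  have hmpos : 0 < m := hvpos k
  set δ₁ : ℝ := min (δ / (2 * m)) (1 / 2) with hδ₁
  have hδ₁pos : 0 < δ₁ := lt_min (by positivity) (by norm_num)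
  have hδ₁lt1 : δ₁ < 1 := lt_of_le_of_lt (min_le_right _ _) (by norm_num)
  set c : ℝ := min (δ₁ - Real.log (1 + δ₁)) (-δ₁ - Real.log (1 - δ₁)) with hc
  have hcpos : 0 < c := by
    refine lt_min ?_ ?_
    · have := Real.log_lt_sub_one_of_pos (x := 1 + δ₁) (by linarith) (by linarith)
      linarith
    · have := Real.log_lt_sub_one_of_pos (x := 1 - δ₁) (by linarith) (by linarith)
      linarith
  have hKpos : (0:ℝ) < K := by exact_mod_cast hK
  set η : ℝ := min (δ / 2) (c * m / K) with hη
  have hηpos : 0 < η := lt_min (by linarith) (by positivity)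
  have hev : ∀ᶠ L in atTop, Real.exp (-L) < η :=
    Real.tendsto_exp_neg_atTop_nhds_zero.eventually_lt_const hηpos
  filter_upwards [hev] with L hL
  set ε := Real.exp (-L) with hε
  have hεpos : 0 < ε := Real.exp_pos _
  obtain ⟨hwn, hws⟩ := hwsimplex L
  have hmain := key L
  -- bound the terms j ≠ k
  have hterm : ∀ j, v j * (Real.log (w L j + ε) - Real.log (v j)) ≤ w L j + ε - v j := by
    intro j
    have h1 := log_diff_le (hvpos j) (add_pos_of_nonneg_of_pos (hwn j) hεpos)
    calc v j * (Real.log (w L j + ε) - Real.log (v j)) ≤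
        v j * ((w L j + ε - v j) / v j) :=
          mul_le_mul_of_nonneg_left h1 (hvnonneg j)
      _ = w L j + ε - v j := by
          rw [mul_comm, div_mul_cancel₀ _ (hvpos j).ne']
  rw [← hε] at hmain
  have hsplit : v k * (Real.log (w L k + ε) - Real.log (v k)) ≥
      -(∑ j ∈ Finset.univ.erase k, (w L j + ε - v j)) := by
    have h1 : ∑ j ∈ Finset.univ.erase k,
        v j * (Real.log (w L j + ε) - Real.log (v j)) ≤
        ∑ j ∈ Finset.univ.erase k, (w L j + ε - v j) :=
      Finset.sum_le_sum fun j _ => hterm j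
    have h2 : ∑ j ∈ Finset.univ.erase k,
        v j * (Real.log (w L j + ε) - Real.log (v j)) +
        v k * (Real.log (w L k + ε) - Real.log (v k)) =
        ∑ j, v j * (Real.log (w L j + ε) - Real.log (v j)) :=
      Finset.sum_erase_add Finset.univ _ (Finset.mem_univ k)
    linarith
  -- compute the erased sum
  have hcard : (Finset.univ.erase k).card = K - 1 := by
    rw [Finset.card_erase_of_mem (Finset.mem_univ k)]
    simp
  have hwerase : ∑ j ∈ Finset.univ.erase k, w L j = 1 - w L k := by
    have := Finset.sum_erase_add Finset.univ (w L) (Finset.mem_univ k)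
    linarith [hws ▸ this]
  have hverase : ∑ j ∈ Finset.univ.erase k, v j = 1 - v k := by
    have := Finset.sum_erase_add Finset.univ v (Finset.mem_univ k)
    linarith [hvsum ▸ this]
  have hsumerase : ∑ j ∈ Finset.univ.erase k, (w L j + ε - v j) =
      (1 - w L k) + (K - 1 : ℝ) * ε - (1 - v k) := by
    have hcast : ((K - 1 : ℕ) : ℝ) = (K : ℝ) - 1 := by
      have := Nat.cast_sub (R := ℝ) hK
      simpa using this
    rw [Finset.sum_sub_distrib, Finset.sum_add_distrib, hwerase, hverase,
      Finset.sum_const, hcard, nsmul_eq_mul, hcast]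
  -- the phi inequality: m * (t - 1 - log t) ≤ K * ε with t = (w L k + ε) / m
  set a := w L k + ε with ha
  have hapos : 0 < a := add_pos_of_nonneg_of_pos (hwn k) hεpos
  have hkey2 : m * (Real.log a - Real.log m) ≥ a - m - (K:ℝ) * ε := by
    rw [hsumerase] at hsplit
    have : v k * (Real.log (w L k + ε) - Real.log (v k)) ≥
        w L k - v k - ((K:ℝ) - 1) * ε := by linarith
    simp only [← hm, ← ha] at this ⊢
    linarith
  set t := a / m with hT
  have htpos : 0 < t := div_pos hapos hmpos
  have hat : a = t * m := by rw [hT]; field_simp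
  have hat' : a = m * t := by rw [hat, mul_comm]
  have hphi : t - 1 - Real.log t < c := by
    have hlogt : Real.log t = Real.log a - Real.log m := Real.log_div hapos.ne' hmpos.ne'
    have hKε : (K:ℝ) * ε < m * c := by
      have h0 : ε < c * m / K := lt_of_lt_of_le hL (min_le_right _ _)
      calc (K:ℝ) * ε < (K:ℝ) * (c * m / K) := mul_lt_mul_of_pos_left h0 hKpos
        _ = m * c := by field_simp
    have h1 : m * (t - 1 - Real.log t) ≤ (K:ℝ) * ε := by
      rw [hlogt]
      nlinarith [hkey2, hat]
    exact lt_of_mul_lt_mul_left (lt_of_le_of_lt h1 hKε) hmpos.le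
  have ht_hi : t < 1 + δ₁ := by
    by_contra h
    push_neg at h
    have := phi_lower_hi hδ₁pos h
    have hcle : c ≤ δ₁ - Real.log (1 + δ₁) := min_le_left _ _
    linarith
  have ht_lo : 1 - δ₁ < t := by
    by_contra h
    push_neg at h
    have := phi_lower_lo hδ₁pos hδ₁lt1 htpos h
    have hcle : c ≤ -δ₁ - Real.log (1 - δ₁) := min_le_right _ _
    linarith
  -- conclude
  have hmδ₁ : m * δ₁ ≤ δ / 2 := by
    have h1 : δ₁ ≤ δ / (2 * m) := min_le_left _ _
    calc m * δ₁ ≤ m * (δ / (2 * m)) := mul_le_mul_of_nonneg_left h1 hmpos.le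
      _ = δ / 2 := by field_simp
  have hεδ : ε < δ / 2 := lt_of_lt_of_le hL (min_le_left _ _)
  have hab1 : a - m < m * δ₁ := by
    have := mul_lt_mul_of_pos_left ht_hi hmpos
    linarith [hat']
  have hab2 : m - a < m * δ₁ := by
    have := mul_lt_mul_of_pos_left ht_lo hmpos
    linarith [hat']
  rw [Real.dist_eq, abs_lt]
  constructor
  · have : a = w L k + ε := ha
    linarith
  · have : a = w L k + ε := ha
    linarith
end
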